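/- Let v, w ∈ ℤ² be primitive vectors with ε = det(v, w) ≠ 0 and |ε| ≥ 2. Let x (resp. y) be the unique non-negative integer less than |ε| such that (v, w)·[[1, −x],[0, |ε|]]^{−1} (resp. (w, v)·[[1, −y],[0, |ε|]]^{−1}) is a unimodular integer matrix, and let |ε|/x = n_1 − 1/(n_2 − 1/(⋯ − 1/n_l)), all n_j ≥ 2, be the Hirzebruch–Jung continued fraction expansion. Then [[0, −1],[1, n_1]]·[[0, −1],[1, n_2]]⋯[[0, −1],[1, n_l]] = [[(1 − xy)/|ε|, −x],[y, |ε|]]. -/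

import Mathlib

/-- determinant of the 2×2 matrix with columns `v` and `w` -/
def det2 (v w : Fin 2 → ℤ) : ℤ := v 0 * w 1 - v 1 * w 0

/-- the 2×2 matrix with columns `v` and `w` -/
def colMat (v w : Fin 2 → ℤ) : Matrix (Fin 2) (Fin 2) ℤ := !![v 0, w 0; v 1, w 1]

/-- a 2×2 integer matrix is unimodular if its determinant is `±1` -/
def Unimod (A : Matrix (Fin 2) (Fin 2) ℤ) : Prop := A.det = 1 ∨ A.det = -1

/-- a vector of `ℤ²` is primitive if its components are relatively prime -/
def Primitive (v : Fin 2 → ℤ) : Prop := Int.gcd (v 0) (v 1) = 1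

/-- value of the Hirzebruch–Jung continued fraction `n₁ - 1/(n₂ - 1/(⋯ - 1/n_l))` -/
def hjEval : List ℤ → ℚ
  | [] => 0
  | n :: ns => (n : ℚ) - 1 / hjEval ns

lemma hj_key (ns : List ℤ) (hne : ns ≠ []) (h2 : ∀ n ∈ ns, 2 ≤ n) :
    ∃ k x y m : ℤ, (ns.map fun n => !![0, -1; 1, n]).prod = !![k, -x; y, m] ∧
      0 < x ∧ x < m ∧ 0 ≤ y ∧ y < m ∧ k * m + x * y = 1 ∧
      hjEval ns = (m : ℚ) / (x : ℚ) := by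
  induction ns with
  | nil => simp at hne
  | cons n ns ih =>
    have hn : (2:ℤ) ≤ n := h2 n List.mem_cons_self
    rcases eq_or_ne ns [] with rfl | hns
    · refine ⟨0, 1, 1, n, ?_, one_pos, by omega, zero_le_one, by omega, by ring, ?_⟩
      · simp
      · show (n:ℚ) - 1 / hjEval [] = _
        show (n:ℚ) - 1 / 0 = _
        simp
    · obtain ⟨k', x', y', m', hprod, hx'0, hx'm, hy'0, hy'm, hdet, hval⟩ :=
        ih hns (fun a ha => h2 a (List.mem_cons_of_mem _ ha))
      have hy'1 : 1 ≤ y' := by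
        rcases eq_or_lt_of_le hy'0 with h | h
        · exfalso
          have hdvd : m' ∣ 1 := ⟨k', by linear_combination -hdet - x' * h⟩
          have := Int.le_of_dvd one_pos hdvd
          omega
        · omega
      have hky : -y' < k' := by nlinarith
      have hd1 : 1 ≤ m' - y' := by omega
      have hm2 : m' + 1 ≤ n * m' - x' := by nlinarith
      have h4 : 1 * (m' + 1) ≤ (m' - y') * (n * m' - x') :=
        mul_le_mul hd1 hm2 (by omega) (by omega)
      refine ⟨-y', m', k' + n * y', n * m' - x', ?_, by omega, by nlinarith, by nlinarith,
        by nlinarith, by linear_combination hdet, ?_⟩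
      · rw [List.map_cons, List.prod_cons, hprod]
        rw [Matrix.mul_fin_two]
        congr 1 <;> ring_nf
      · have hx'Q : (x':ℚ) ≠ 0 := Int.cast_ne_zero.mpr (by omega)
        have hm'Q : (m':ℚ) ≠ 0 := Int.cast_ne_zero.mpr (by omega)
        show (n:ℚ) - 1 / hjEval ns = _
        rw [hval, one_div_div]
        push_cast
        field_simp

/-- Lemma 4.1: with `x`, `y` the integers of Lemma 2.1 for `(v, w)` and `(w, v)` and
`n₁, …, n_l` the Hirzebruch–Jung expansion of `|ε|/x`, one has
`[[0,-1],[1,n₁]] ⋯ [[0,-1],[1,n_l]] = [[(1-xy)/|ε|, -x],[y, |ε|]]`. -/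
theorem hj_matrix_product_of_pair (v w : Fin 2 → ℤ) (hv : Primitive v) (hw : Primitive w)
    (hε : det2 v w ≠ 0) (hε2 : 2 ≤ |det2 v w|)
    (x y : ℤ) (hx0 : 0 ≤ x) (hx1 : x < |det2 v w|) (hy0 : 0 ≤ y) (hy1 : y < |det2 v w|)
    (hx : ∃ P : Matrix (Fin 2) (Fin 2) ℤ, Unimod P ∧
      P * !![1, -x; 0, |det2 v w|] = colMat v w)
    (hy : ∃ Q : Matrix (Fin 2) (Fin 2) ℤ, Unimod Q ∧
      Q * !![1, -y; 0, |det2 v w|] = colMat w v)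
    (ns : List ℤ) (hns : ∀ n ∈ ns, 2 ≤ n)
    (hhj : hjEval ns = ((|det2 v w| : ℤ) : ℚ) / (x : ℚ)) :
    ∃ k : ℤ, 1 - x * y = k * |det2 v w| ∧
      (ns.map fun n => !![0, -1; 1, n]).prod = !![k, -x; y, |det2 v w|] := by
  set m : ℤ := |det2 v w| with hm
  obtain ⟨P, hPu, hP⟩ := hx
  obtain ⟨Q, hQu, hQ⟩ := hy
  have e01 := congrFun (congrFun hP 0) 1
  have e11 := congrFun (congrFun hP 1) 1
  simp [Matrix.mul_apply, Fin.sum_univ_two, colMat] at e01 e11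
  have f01 := congrFun (congrFun hQ 0) 1
  have f11 := congrFun (congrFun hQ 1) 1
  simp [Matrix.mul_apply, Fin.sum_univ_two, colMat] at f01 f11
  -- coprimality of the components
  have hcw : IsCoprime (w 0) (w 1) := Int.isCoprime_iff_gcd_eq_one.mpr hw
  have hcv : IsCoprime (v 0) (v 1) := Int.isCoprime_iff_gcd_eq_one.mpr hv
  obtain ⟨a, b, hab⟩ := hcw
  obtain ⟨c, d, hcd⟩ := hcv
  -- x ≠ 0
  have hxne : x ≠ 0 := by
    rintro rfl
    have : m ∣ 1 := ⟨a * P 0 1 + b * P 1 1, by linear_combination -hab - a * e01 - b * e11⟩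
    have := Int.le_of_dvd one_pos this
    omega
  have hxpos : 0 < x := lt_of_le_of_ne hx0 (Ne.symm hxne)
  -- IsCoprime x m
  have hcxm : IsCoprime x m :=
    ⟨-(a * (P 0 0) + b * (P 1 0)), a * P 0 1 + b * P 1 1, by
      linear_combination hab + a * e01 + b * e11⟩
  -- m ∣ 1 - x * y
  have hmdvd : m ∣ 1 - x * y := by
    refine ⟨c * (Q 0 1 - y * P 0 1) + d * (Q 1 1 - y * P 1 1), ?_⟩
    have g0 : (1 - x * y) * v 0 = m * (Q 0 1 - y * P 0 1) := by
      have hq00 : Q 0 0 = w 0 := by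
        have := congrFun (congrFun hQ 0) 0
        simpa [Matrix.mul_apply, Fin.sum_univ_two, colMat] using this
      have hp00 : P 0 0 = v 0 := by
        have := congrFun (congrFun hP 0) 0
        simpa [Matrix.mul_apply, Fin.sum_univ_two, colMat] using this
      rw [hq00] at f01; rw [hp00] at e01
      linear_combination y * e01 - f01
    have g1 : (1 - x * y) * v 1 = m * (Q 1 1 - y * P 1 1) := by
      have hq10 : Q 1 0 = w 1 := by
        have := congrFun (congrFun hQ 1) 0
        simpa [Matrix.mul_apply, Fin.sum_univ_two, colMat] using this
      have hp10 : P 1 0 = v 1 := by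
        have := congrFun (congrFun hP 1) 0
        simpa [Matrix.mul_apply, Fin.sum_univ_two, colMat] using this
      rw [hq10] at f11; rw [hp10] at e11
      linear_combination y * e11 - f11
    linear_combination c * g0 + d * g1 - (1 - x * y) * hcd
  -- ns is nonempty
  have hne : ns ≠ [] := by
    rintro rfl
    have h0 : hjEval ([] : List ℤ) = 0 := rfl
    rw [h0] at hhj
    have hmQ : ((m : ℤ) : ℚ) ≠ 0 := Int.cast_ne_zero.mpr (by omega)
    have hxQ : ((x : ℤ) : ℚ) ≠ 0 := Int.cast_ne_zero.mpr hxne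
    exact (div_ne_zero hmQ hxQ) hhj.symm
  obtain ⟨k', x'', y'', m'', hprod, hx''0, hx''m, hy''0, hy''m, hdet', hval'⟩ :=
    hj_key ns hne hns
  -- cross multiplication: m'' * x = m * x''
  have hcross : m'' * x = m * x'' := by
    have h := hval'.symm.trans hhj
    have hxQ : ((x : ℤ) : ℚ) ≠ 0 := Int.cast_ne_zero.mpr hxne
    have hx''Q : ((x'' : ℤ) : ℚ) ≠ 0 := Int.cast_ne_zero.mpr (by omega)
    field_simp at h
    rw [mul_comm m]
    exact_mod_cast h
  have hcx'' : IsCoprime x'' m'' := ⟨y'', k', by linear_combination hdet'⟩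
  have hxeq : x'' = x := by
    have d1 : x'' ∣ x := hcx''.dvd_of_dvd_mul_left ⟨m, by linear_combination hcross⟩
    have d2 : x ∣ x'' := hcxm.dvd_of_dvd_mul_left ⟨m'', by linear_combination -hcross⟩
    exact Int.dvd_antisymm (by omega) hx0 d1 d2
  have hmeq : m'' = m := by
    rw [hxeq] at hcross
    exact mul_right_cancel₀ hxne hcross
  have hdx : 1 - x * y'' = k' * m := by
    rw [hxeq, hmeq] at hdet'
    linarith
  have hyeq : y'' = y := by
    have h1 : m ∣ x * (y - y'') := by
      obtain ⟨k0, hk0⟩ := hmdvd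
      exact ⟨k' - k0, by linear_combination hdx - hk0⟩
    have h2 : m ∣ y - y'' := hcxm.symm.dvd_of_dvd_mul_left h1
    obtain ⟨c0, hc0⟩ := h2
    have hmpos : (0:ℤ) < m := by omega
    have hcl : c0 < 1 := by
      by_contra hcl
      push_neg at hcl
      nlinarith
    have hcg : -1 < c0 := by
      by_contra hcg
      push_neg at hcg
      nlinarith
    have : c0 = 0 := by omega
    rw [this, mul_zero] at hc0
    omega
  refine ⟨k', by linear_combination hdx + x * hyeq, ?_⟩
  rw [hprod, hxeq, hyeq, hmeq]
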